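/- (SOCP-inexactness forces zero dual multipliers: W̃ ⊆ W̃_d.) Let w ∈ ℝ^W. Assume fp'(w) = dp'(w) = 0, that FP'(w) attains its minimum, and that w is SOCP-inexact, i.e., every optimal FP'(w) solution (x, y, z_s, z_q) (one with objective value 0) satisfies ‖y_j‖₂ < ⟨c_q^j, x⟩ + γ_q^j + z_{q,j} for at least one index j. Then every optimal dual solution, i.e., every dual feasible (μ, λ) with D_w(μ, λ) = 0, satisfies λ_{q,j} = 0 for at least one index j. -/

import Mathlib

open Matrix

/-- Euclidean norm on `Fin k → ℝ`. -/
noncomputable def euclNorm {k : ℕ} (y : Fin k → ℝ) : ℝ := Real.sqrt (∑ i, (y i) ^ 2)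

/-- Euclidean inner product on `Fin k → ℝ`. -/
def dotp {k : ℕ} (a b : Fin k → ℝ) : ℝ := ∑ i, a i * b i

/-- The constant data of the SOCP `FP'(w)` (and of its dual `DP'(w)`). -/
structure SOCPData (n m s N W : ℕ) where
  Af : Matrix (Fin m) (Fin n) ℝ
  Bf : Matrix (Fin m) (Fin W) ℝ
  As : Matrix (Fin s) (Fin n) ℝ
  gf : Fin m → ℝ
  gs : Fin s → ℝ
  Ay : Fin N → Matrix (Fin 3) (Fin n) ℝ
  bY : Fin N → Fin 3 → ℝ
  cq : Fin N → Fin n → ℝ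
  gq : Fin N → ℝ

/-- Feasibility of `(x, y, z_s, z_q)` for the SOCP `FP'(w)`. -/
def FPfeas {n m s N W : ℕ} (d : SOCPData n m s N W) (w : Fin W → ℝ) (x : Fin n → ℝ)
    (y : Fin N → Fin 3 → ℝ) (zs : Fin s → ℝ) (zq : Fin N → ℝ) : Prop :=
  (∀ i, 0 ≤ zs i) ∧ (∀ j, 0 ≤ zq j) ∧
  d.Af.mulVec x + d.Bf.mulVec w + d.gf = 0 ∧
  (∀ i, d.As.mulVec x i + d.gs i ≤ zs i) ∧
  (∀ j, y j = (d.Ay j).mulVec x + d.bY j) ∧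
  (∀ j, euclNorm (y j) ≤ dotp (d.cq j) x + d.gq j + zq j)

/-- Dual feasibility of `(μ_f, μ_y, λ_s, λ_q)` for `DP'(w)`. -/
def DualFeas {n m s N W : ℕ} (d : SOCPData n m s N W) (muf : Fin m → ℝ)
    (muy : Fin N → Fin 3 → ℝ) (ls : Fin s → ℝ) (lq : Fin N → ℝ) : Prop :=
  (∀ i, 0 ≤ ls i ∧ ls i ≤ 1) ∧ (∀ j, 0 ≤ lq j ∧ lq j ≤ 1) ∧
  (d.Af.transpose.mulVec muf + d.As.transpose.mulVec ls
    = (∑ j, (d.Ay j).transpose.mulVec (muy j)) + ∑ j, lq j • d.cq j) ∧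
  (∀ j, euclNorm (muy j) ≤ lq j)

/-- The dual objective `D_w(μ, λ)`. -/
def Dobj {n m s N W : ℕ} (d : SOCPData n m s N W) (w : Fin W → ℝ) (muf : Fin m → ℝ)
    (muy : Fin N → Fin 3 → ℝ) (ls : Fin s → ℝ) (lq : Fin N → ℝ) : ℝ :=
  dotp muf (d.Bf.mulVec w + d.gf) + dotp ls d.gs
    - (∑ j, dotp (muy j) (d.bY j)) - ∑ j, lq j * d.gq j

/-- `fp'(w)`: the optimal (infimum) value of the primal SOCP `FP'(w)`, in `EReal`. -/
noncomputable def fpVal {n m s N W : ℕ} (d : SOCPData n m s N W) (w : Fin W → ℝ) : EReal :=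
  sInf {v : EReal | ∃ x y zs zq, FPfeas d w x y zs zq ∧
    v = (((∑ i, zs i) + ∑ j, zq j : ℝ) : EReal)}

/-- `dp'(w)`: the optimal (supremum) value of the dual SOCP `DP'(w)`, in `EReal`. -/
noncomputable def dpVal {n m s N W : ℕ} (d : SOCPData n m s N W) (w : Fin W → ℝ) : EReal :=
  sSup {v : EReal | ∃ muf muy ls lq, DualFeas d muf muy ls lq ∧
    v = ((Dobj d w muf muy ls lq : ℝ) : EReal)}

lemma dotp_add_left {k : ℕ} (a b x : Fin k → ℝ) : dotp (a + b) x = dotp a x + dotp b x := by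
  simp [dotp, add_mul, Finset.sum_add_distrib]

lemma dotp_sum_left {k : ℕ} {ι : Type*} (s : Finset ι) (f : ι → Fin k → ℝ) (x : Fin k → ℝ) :
    dotp (∑ j ∈ s, f j) x = ∑ j ∈ s, dotp (f j) x := by
  simp only [dotp, Finset.sum_apply, Finset.sum_mul]
  rw [Finset.sum_comm]

lemma dotp_smul_left {k : ℕ} (c : ℝ) (a x : Fin k → ℝ) : dotp (c • a) x = c * dotp a x := by
  simp [dotp, Finset.mul_sum, mul_assoc]

lemma dotp_le_enorm {k : ℕ} (a b : Fin k → ℝ) : dotp a b ≤ euclNorm a * euclNorm b :=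
  Real.sum_mul_le_sqrt_mul_sqrt _ a b

lemma dotp_eq {k : ℕ} (a b : Fin k → ℝ) : dotp a b = a ⬝ᵥ b := rfl

lemma dotp_transpose {p q : ℕ} (A : Matrix (Fin p) (Fin q) ℝ) (u : Fin p → ℝ) (x : Fin q → ℝ) :
    dotp (A.transpose.mulVec u) x = dotp u (A.mulVec x) := by
  rw [dotp_eq, dotp_eq, Matrix.mulVec_transpose, ← Matrix.dotProduct_mulVec]

lemma enorm_nonneg' {k : ℕ} (a : Fin k → ℝ) : 0 ≤ euclNorm a := Real.sqrt_nonneg _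

lemma enorm_neg' {k : ℕ} (a : Fin k → ℝ) : euclNorm (-a) = euclNorm a := by
  simp [euclNorm]

/-- SOCP-inexactness forces zero dual multipliers (`W̃ ⊆ W̃_d`): if
`fp'(w) = dp'(w) = 0`, the minimum of `FP'(w)` is attained, and every optimal
primal solution has a strict second-order cone inequality at some line `j`, then
every optimal dual solution has `λ_{q,j} = 0` for some `j`. -/
theorem stmt_14 {n m s N W : ℕ} (hn : 0 < n) (hm : 0 < m) (hs : 0 < s) (hN : 0 < N)
    (hW : 0 < W) (d : SOCPData n m s N W) (w : Fin W → ℝ)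
    (hfp : fpVal d w = 0) (hdp : dpVal d w = 0)
    (hattain : ∃ x y zs zq, FPfeas d w x y zs zq ∧ (∑ i, zs i) + ∑ j, zq j = (0 : ℝ))
    (hinexact : ∀ x y zs zq, FPfeas d w x y zs zq →
      (∑ i, zs i) + ∑ j, zq j = (0 : ℝ) →
      ∃ j, euclNorm (y j) < dotp (d.cq j) x + d.gq j + zq j) :
    ∀ muf muy ls lq, DualFeas d muf muy ls lq → Dobj d w muf muy ls lq = 0 →
      ∃ j, lq j = 0 := by
  intro muf muy ls lq hdf hobj
  obtain ⟨x, y, zs, zq, hfeas, hsum⟩ := hattain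
  obtain ⟨j0, hj0⟩ := hinexact x y zs zq hfeas hsum
  obtain ⟨hzs, hzq, heq, hineqs, hy, hcone⟩ := hfeas
  obtain ⟨hls, hlq, hstat, hmuy⟩ := hdf
  refine ⟨j0, ?_⟩
  by_contra hne
  have hpos : 0 < lq j0 := lt_of_le_of_ne (hlq j0).1 (Ne.symm hne)
  -- Bf w + gf = -(Af x)
  have hBf : d.Bf.mulVec w + d.gf = -(d.Af.mulVec x) := by
    rw [add_assoc] at heq
    exact eq_neg_of_add_eq_zero_right heq
  -- stationarity dotted with x
  have h1 : dotp muf (d.Af.mulVec x) + dotp ls (d.As.mulVec x)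
      = (∑ j, dotp (muy j) ((d.Ay j).mulVec x)) + ∑ j, lq j * dotp (d.cq j) x := by
    have h := congrArg (fun v => dotp v x) hstat
    simp only [dotp_add_left, dotp_sum_left, dotp_smul_left, dotp_transpose] at h
    exact h
  -- key identity
  have key : Dobj d w muf muy ls lq
      = dotp ls (d.As.mulVec x + d.gs)
        - ∑ j, (dotp (muy j) (y j) + lq j * (dotp (d.cq j) x + d.gq j)) := by
    simp only [Dobj, hBf, dotp_eq, dotProduct_neg, dotProduct_add]
    simp only [hy, dotProduct_add, mul_add, Finset.sum_add_distrib]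
    simp only [← dotp_eq] at h1 ⊢
    linarith [h1]
  -- slack bound
  have hS1 : dotp ls (d.As.mulVec x + d.gs) ≤ ∑ i, zs i := by
    apply Finset.sum_le_sum
    intro i _
    have h2 : ls i * ((d.As.mulVec x + d.gs) i) ≤ ls i * zs i :=
      mul_le_mul_of_nonneg_left (hineqs i) (hls i).1
    nlinarith [(hls i).2, hzs i]
  -- Cauchy-Schwarz bound
  have hCS : ∀ j, -(dotp (muy j) (y j)) ≤ lq j * euclNorm (y j) := by
    intro j
    have h1' : dotp (-(muy j)) (y j) ≤ euclNorm (-(muy j)) * euclNorm (y j) := dotp_le_enorm _ _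
    rw [enorm_neg'] at h1'
    have h3 : dotp (-(muy j)) (y j) = -(dotp (muy j) (y j)) := by
      simp [dotp, neg_mul, Finset.sum_neg_distrib]
    nlinarith [hmuy j, enorm_nonneg' (y j)]
  -- termwise bound on cone terms
  have hTle : ∀ j, -(dotp (muy j) (y j) + lq j * (dotp (d.cq j) x + d.gq j)) ≤ zq j := by
    intro j
    have hc := hcone j
    nlinarith [hCS j, (hlq j).1, (hlq j).2, hzq j]
  have hTlt : -(dotp (muy j0) (y j0) + lq j0 * (dotp (d.cq j0) x + d.gq j0)) < zq j0 := by
    nlinarith [hCS j0, (hlq j0).2, hzq j0]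
  have hsum2 : ∑ j, -(dotp (muy j) (y j) + lq j * (dotp (d.cq j) x + d.gq j)) < ∑ j, zq j :=
    Finset.sum_lt_sum (fun j _ => hTle j) ⟨j0, Finset.mem_univ j0, hTlt⟩
  rw [Finset.sum_neg_distrib] at hsum2
  linarith [key, hS1]
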